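/- Let m be a natural number. (i) For distinct i, j ∈ Fin m and any finite set A ⊆ Fin m: if i ∈ A then R({(i,j)}) v_A = v_{(A∪{j})∖{i}}, and if i ∉ A then R({(i,j)}) v_A = 0. (ii) For any nonempty finite set K of ordered pairs of elements of Fin m with pairwise distinct components, and any finite set A ⊆ Fin m: if F₁(K) ⊆ A then R(K) v_A = v_{(A∪F₂(K))∖F₁(K)}, and if F₁(K) ⊄ A then R(K) v_A = 0. -/

import Mathlib

/-- The vector `v_A` : its value at a label `x : Fin m → ZMod 2` is `∏_{a ∈ A} x a`. -/
def vA (m : ℕ) (A : Finset (Fin m)) : (Fin m → ZMod 2) → ZMod 2 :=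
  fun x => ∏ a ∈ A, x a

/-- The space of vectors: functions from labels to `ZMod 2`. -/
abbrev Vec (m : ℕ) := (Fin m → ZMod 2) → ZMod 2

/-- The `ZMod 2`-linear action of an involutive map `f` on the label set:
`w ↦ w ∘ f` (for an involutive permutation `π` this is `M_π w = w ∘ π⁻¹`). -/
def Mlin (m : ℕ) (f : (Fin m → ZMod 2) → (Fin m → ZMod 2)) :
    Module.End (ZMod 2) (Vec m) where
  toFun w := w ∘ f
  map_add' _ _ := rfl
  map_smul' _ _ := rfl

/-- `Q(i,j)`: the involutive permutation of labels replacing `x i` by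
`x i + x j` and fixing all other coordinates. -/
def Qmap (m : ℕ) (i j : Fin m) : (Fin m → ZMod 2) → (Fin m → ZMod 2) :=
  fun x => Function.update x i (x i + x j)

/-- All first and second components of the pairs in `K` are pairwise
distinct. -/
def distinctPairs (m : ℕ) (K : Finset (Fin m × Fin m)) : Prop :=
  (∀ p ∈ K, p.1 ≠ p.2) ∧
  (∀ p ∈ K, ∀ q ∈ K, p ≠ q →
    p.1 ≠ q.1 ∧ p.1 ≠ q.2 ∧ p.2 ≠ q.1 ∧ p.2 ≠ q.2)

/-- The permutation `Q(K)` of the labels: it sends `x` to the label `y` with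
`y i = x i + x j` for each `(i,j) ∈ K` and `y l = x l` for all other `l`. -/
def QKmap (m : ℕ) (K : Finset (Fin m × Fin m)) :
    (Fin m → ZMod 2) → (Fin m → ZMod 2) :=
  fun x l => x l + ∑ p ∈ K.filter (fun p => p.1 = l), x p.2

/-- The set of first components of the pairs of `K`. -/
def F1 (m : ℕ) (K : Finset (Fin m × Fin m)) : Finset (Fin m) := K.image Prod.fst

/-- The set of second components of the pairs of `K`. -/
def F2 (m : ℕ) (K : Finset (Fin m × Fin m)) : Finset (Fin m) := K.image Prod.snd

/-- The replacement operator `R(K)`: the (commuting) composition over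
`(i,j) ∈ K` of the operators `R(i,j) = M_{Q(i,j)} + id`; `R(∅) = id`. -/
noncomputable def RK (m : ℕ) (K : Finset (Fin m × Fin m)) :
    Module.End (ZMod 2) (Vec m) :=
  (K.toList.map fun p => Mlin m (Qmap m p.1 p.2) + 1).prod

lemma zmod2_sq (z : ZMod 2) : z * z = z := by revert z; decide

lemma mul_prod_insert (m : ℕ) (S : Finset (Fin m)) (j : Fin m) (x : Fin m → ZMod 2) :
    x j * ∏ a ∈ S, x a = ∏ a ∈ insert j S, x a := by
  by_cases hj : j ∈ S
  · rw [Finset.insert_eq_self.2 hj, ← Finset.mul_prod_erase S x hj, ← mul_assoc, zmod2_sq]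
  · rw [Finset.prod_insert hj]

lemma single_step (m : ℕ) (i j : Fin m) (hij : i ≠ j) (A : Finset (Fin m)) :
    (Mlin m (Qmap m i j) + 1) (vA m A) =
      if i ∈ A then vA m ((A ∪ {j}) \ {i}) else 0 := by
  have happ : ∀ w : Vec m, (Mlin m (Qmap m i j) + 1) w
      = fun x => w (Qmap m i j x) + w x := by
    intro w; rfl
  rw [happ]
  by_cases hi : i ∈ A
  · rw [if_pos hi]
    have hset : (A ∪ {j}) \ {i} = insert j (A.erase i) := by
      ext a
      simp only [Finset.mem_sdiff, Finset.mem_union, Finset.mem_singleton,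
        Finset.mem_insert, Finset.mem_erase]
      constructor
      · rintro ⟨h1 | h2, h3⟩
        · exact Or.inr ⟨h3, h1⟩
        · exact Or.inl h2
      · rintro (rfl | ⟨h3, h1⟩)
        · exact ⟨Or.inr rfl, fun h => hij h.symm⟩
        · exact ⟨Or.inl h1, h3⟩
    funext x
    have hQ : vA m A (Qmap m i j x)
        = (x i + x j) * ∏ a ∈ A.erase i, x a := by
      unfold vA Qmap
      rw [← Finset.mul_prod_erase A _ hi, Function.update_self]
      congr 1
      exact Finset.prod_congr rfl fun a ha =>
        Function.update_of_ne (Finset.ne_of_mem_erase ha) _ x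
    have hA : vA m A x = x i * ∏ a ∈ A.erase i, x a := by
      unfold vA
      rw [← Finset.mul_prod_erase A _ hi]
    have key : ∀ a b c : ZMod 2, (a + b) * c + a * c = b * c := by decide
    rw [hQ, hA, key, hset, ← vA]
    unfold vA
    exact mul_prod_insert m (A.erase i) j x
  · rw [if_neg hi]
    funext x
    have hQ : vA m A (Qmap m i j x) = vA m A x := by
      unfold vA Qmap
      exact Finset.prod_congr rfl fun a ha =>
        Function.update_of_ne (by rintro rfl; exact hi ha) _ x
    rw [hQ]
    exact CharTwo.add_self_eq_zero _

lemma list_step (m : ℕ) (L : List (Fin m × Fin m)) (hnd : L.Nodup)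
    (h1 : ∀ p ∈ L, p.1 ≠ p.2)
    (h2 : ∀ p ∈ L, ∀ q ∈ L, p ≠ q →
      p.1 ≠ q.1 ∧ p.1 ≠ q.2 ∧ p.2 ≠ q.1 ∧ p.2 ≠ q.2)
    (A : Finset (Fin m)) :
    (L.map fun p => Mlin m (Qmap m p.1 p.2) + 1).prod (vA m A) =
      if L.toFinset.image Prod.fst ⊆ A then
        vA m ((A ∪ L.toFinset.image Prod.snd) \ L.toFinset.image Prod.fst)
      else 0 := by
  induction L with
  | nil => simp [vA]
  | cons p L ih =>
    have hpL : p ∉ L := (List.nodup_cons.1 hnd).1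
    have hnd' : L.Nodup := (List.nodup_cons.1 hnd).2
    have h1' : ∀ q ∈ L, q.1 ≠ q.2 := fun q hq => h1 q (List.mem_cons_of_mem p hq)
    have h2' : ∀ q ∈ L, ∀ r ∈ L, q ≠ r →
        q.1 ≠ r.1 ∧ q.1 ≠ r.2 ∧ q.2 ≠ r.1 ∧ q.2 ≠ r.2 := fun q hq r hr hqr =>
      h2 q (List.mem_cons_of_mem p hq) r (List.mem_cons_of_mem p hr) hqr
    have hdist : ∀ q ∈ L, p.1 ≠ q.1 ∧ p.1 ≠ q.2 ∧ p.2 ≠ q.1 ∧ p.2 ≠ q.2 := by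
      intro q hq
      exact h2 p List.mem_cons_self q (List.mem_cons_of_mem p hq)
        (by rintro rfl; exact hpL hq)
    set F1' := L.toFinset.image Prod.fst with hF1'
    set F2' := L.toFinset.image Prod.snd with hF2'
    have hp1F1 : p.1 ∉ F1' := by
      simp only [hF1', Finset.mem_image, List.mem_toFinset]
      rintro ⟨q, hq, hq1⟩
      exact (hdist q hq).1 hq1.symm
    have hp1F2 : p.1 ∉ F2' := by
      simp only [hF2', Finset.mem_image, List.mem_toFinset]
      rintro ⟨q, hq, hq1⟩
      exact (hdist q hq).2.1 hq1.symm
    have hp2F1 : p.2 ∉ F1' := by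
      simp only [hF1', Finset.mem_image, List.mem_toFinset]
      rintro ⟨q, hq, hq1⟩
      exact (hdist q hq).2.2.1 hq1.symm
    have hF1new : (p :: L).toFinset.image Prod.fst = insert p.1 F1' := by
      simp [hF1', Finset.image_insert]
    have hF2new : (p :: L).toFinset.image Prod.snd = insert p.2 F2' := by
      simp [hF2', Finset.image_insert]
    have hprod : ((p :: L).map fun q => Mlin m (Qmap m q.1 q.2) + 1).prod (vA m A)
        = (Mlin m (Qmap m p.1 p.2) + 1)
          ((L.map fun q => Mlin m (Qmap m q.1 q.2) + 1).prod (vA m A)) := by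
      rw [List.map_cons, List.prod_cons]
      rfl
    rw [hprod, ih hnd' h1' h2', hF1new, hF2new]
    by_cases hF : F1' ⊆ A
    · rw [if_pos hF]
      set B := (A ∪ F2') \ F1' with hB
      have hmemB : p.1 ∈ B ↔ p.1 ∈ A := by
        simp only [hB, Finset.mem_sdiff, Finset.mem_union]
        constructor
        · rintro ⟨h | h, _⟩
          · exact h
          · exact absurd h hp1F2
        · intro h; exact ⟨Or.inl h, hp1F1⟩
      by_cases hpA : p.1 ∈ A
      · rw [single_step m p.1 p.2 (h1 p List.mem_cons_self) B,
          if_pos (hmemB.2 hpA)]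
        rw [if_pos (by rw [Finset.insert_subset_iff]; exact ⟨hpA, hF⟩)]
        have hsets : ((A ∪ F2') \ F1' ∪ {p.2}) \ {p.1}
            = (A ∪ insert p.2 F2') \ insert p.1 F1' := by
          have hne : p.2 ≠ p.1 := (h1 p List.mem_cons_self).symm
          ext a
          simp only [Finset.mem_sdiff, Finset.mem_union, Finset.mem_singleton,
            Finset.mem_insert]
          by_cases ha2 : a = p.2
          · subst ha2
            simp [hne, hp2F1]
          · by_cases ha1 : a = p.1
            · simp [ha1]
            · simp [ha1, ha2]
        exact congrArg (vA m) hsets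
      · rw [single_step m p.1 p.2 (h1 p List.mem_cons_self) B,
          if_neg (fun h => hpA (hmemB.1 h))]
        rw [if_neg (fun h => hpA (h (Finset.mem_insert_self _ _)))]
    · rw [if_neg hF, map_zero]
      rw [if_neg (fun h => hF (fun a ha => h (Finset.mem_insert_of_mem ha)))]

/-- (i) `R({(i,j)}) v_A = v_{(A∪{j})∖{i}}` if `i ∈ A`, and `= 0` if `i ∉ A`.
(ii) For nonempty `K` with pairwise distinct components,
`R(K) v_A = v_{(A∪F₂(K))∖F₁(K)}` if `F₁(K) ⊆ A`, and `= 0` otherwise. -/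
theorem stmt11 (m : ℕ) :
    (∀ i j : Fin m, i ≠ j → ∀ A : Finset (Fin m),
      (i ∈ A → RK m {(i, j)} (vA m A) = vA m ((A ∪ {j}) \ {i})) ∧
      (i ∉ A → RK m {(i, j)} (vA m A) = 0)) ∧
    (∀ K : Finset (Fin m × Fin m), K.Nonempty → distinctPairs m K →
      ∀ A : Finset (Fin m),
      (F1 m K ⊆ A → RK m K (vA m A) = vA m ((A ∪ F2 m K) \ F1 m K)) ∧
      (¬ F1 m K ⊆ A → RK m K (vA m A) = 0)) := by
  have main : ∀ K : Finset (Fin m × Fin m), distinctPairs m K →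
      ∀ A : Finset (Fin m),
      RK m K (vA m A) =
        if F1 m K ⊆ A then vA m ((A ∪ F2 m K) \ F1 m K) else 0 := by
    intro K hK A
    have hnd : K.toList.Nodup := Finset.nodup_toList K
    have h1 : ∀ p ∈ K.toList, p.1 ≠ p.2 := fun p hp =>
      hK.1 p (Finset.mem_toList.1 hp)
    have h2 : ∀ p ∈ K.toList, ∀ q ∈ K.toList, p ≠ q →
        p.1 ≠ q.1 ∧ p.1 ≠ q.2 ∧ p.2 ≠ q.1 ∧ p.2 ≠ q.2 := fun p hp q hq hpq =>
      hK.2 p (Finset.mem_toList.1 hp) q (Finset.mem_toList.1 hq) hpq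
    have := list_step m K.toList hnd h1 h2 A
    rwa [Finset.toList_toFinset] at this
  constructor
  · intro i j hij A
    have hdp : distinctPairs m ({(i, j)} : Finset (Fin m × Fin m)) := by
      constructor
      · intro p hp
        rw [Finset.mem_singleton] at hp
        subst hp; exact hij
      · intro p hp q hq hpq
        rw [Finset.mem_singleton] at hp hq
        exact absurd (hp.trans hq.symm) hpq
    have h := main {(i, j)} hdp A
    have hF1 : F1 m {(i, j)} = {i} := by simp [F1]
    have hF2 : F2 m {(i, j)} = {j} := by simp [F2]
    rw [hF1, hF2] at h
    constructor
    · intro hi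
      rw [h, if_pos (Finset.singleton_subset_iff.2 hi)]
    · intro hi
      rw [h, if_neg (fun hs => hi (Finset.singleton_subset_iff.1 hs))]
  · intro K _ hK A
    have h := main K hK A
    constructor
    · intro hF; rw [h, if_pos hF]
    · intro hF; rw [h, if_neg hF]
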